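/- If μ = (μ, μ, …, μ) with m equal parts and n = mμ, then D⁺(μ) = ∏_{1≤i<j≤m}(r_i − r_j)^{2μ} is μ-symmetric, with lift ((1/μ^m) · S^n_{n−m})^μ. -/

import Mathlib

open MvPolynomial

/-- The `(n-m)`-th subdiscriminant in `n` variables:
`S^n_{n-m} = Σ_{|I| = m} ∏_{i<j ∈ I} (x_i − x_j)²`. -/
noncomputable def subdisc (K : Type*) [Field K] (n m : ℕ) : MvPolynomial (Fin n) K :=
  ∑ I ∈ Finset.powersetCard m (Finset.univ : Finset (Fin n)),
    ∏ p ∈ I.offDiag.filter (fun p => p.1 < p.2), (X p.1 - X p.2) ^ 2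

/-- Reindexing a product of squared differences over ordered pairs of a finset along an
injective-on-the-finset map. -/
lemma prod_sq_pairs_image {α β R : Type*} [LinearOrder α] [LinearOrder β]
    [DecidableEq α] [DecidableEq β]
    [DecidableRel ((· < ·) : α → α → Prop)] [DecidableRel ((· < ·) : β → β → Prop)]
    [CommRing R] (I : Finset α) (f : α → β) (hf : Set.InjOn f I) (h : β → R) :
    ∏ p ∈ ((I.image f).offDiag.filter fun p => p.1 < p.2), (h p.1 - h p.2) ^ 2
      = ∏ p ∈ (I.offDiag.filter fun p => p.1 < p.2), (h (f p.1) - h (f p.2)) ^ 2 := by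
  symm
  refine Finset.prod_bij
    (fun p _ => if f p.1 < f p.2 then (f p.1, f p.2) else (f p.2, f p.1)) ?_ ?_ ?_ ?_
  · rintro ⟨a, b⟩ hp
    simp only [Finset.mem_filter, Finset.mem_offDiag] at hp ⊢
    obtain ⟨⟨ha, hb, hne⟩, hlt⟩ := hp
    have hfne : f a ≠ f b := fun e => hne (hf ha hb e)
    split_ifs with hcase
    · exact ⟨⟨Finset.mem_image_of_mem f ha, Finset.mem_image_of_mem f hb, hfne⟩, hcase⟩
    · exact ⟨⟨Finset.mem_image_of_mem f hb, Finset.mem_image_of_mem f ha, hfne.symm⟩,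
        (hfne.lt_or_gt.resolve_left hcase)⟩
  · rintro ⟨a, b⟩ hp ⟨c, d⟩ hq heq
    simp only [Finset.mem_filter, Finset.mem_offDiag] at hp hq
    obtain ⟨⟨ha, hb, hab⟩, hlab⟩ := hp
    obtain ⟨⟨hc, hd, hcd⟩, hlcd⟩ := hq
    dsimp only at heq
    split_ifs at heq with h1 h2 h2 <;> simp only [Prod.mk.injEq] at heq
    · exact Prod.ext (hf ha hc heq.1) (hf hb hd heq.2)
    · have had : a = d := hf ha hd heq.1
      have hbc : b = c := hf hb hc heq.2
      subst had; subst hbc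
      exact absurd hlcd hlab.asymm
    · have hbc : b = c := hf hb hc heq.1
      have had : a = d := hf ha hd heq.2
      subst had; subst hbc
      exact absurd hlcd hlab.asymm
    · exact Prod.ext (hf ha hc heq.2) (hf hb hd heq.1)
  · rintro ⟨u, v⟩ hq
    simp only [Finset.mem_filter, Finset.mem_offDiag, Finset.mem_image] at hq
    obtain ⟨⟨⟨a, ha, rfl⟩, ⟨b, hb, rfl⟩, hne⟩, hlt⟩ := hq
    have hab : a ≠ b := fun e => hne (e ▸ rfl)
    rcases Ne.lt_or_gt hab with hl | hl
    · refine ⟨(a, b), ?_, ?_⟩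
      · simp [Finset.mem_filter, Finset.mem_offDiag, ha, hb, hab, hl]
      · dsimp only; rw [if_pos hlt]
    · refine ⟨(b, a), ?_, ?_⟩
      · simp [Finset.mem_filter, Finset.mem_offDiag, ha, hb, hab.symm, hl]
      · have hnl : ¬ f b < f a := fun hx => absurd hlt hx.asymm
        dsimp only; rw [if_neg hnl]
  · rintro ⟨a, b⟩ hp
    dsimp only
    split_ifs with hcase
    · rfl
    · ring

lemma subdisc_isSymmetric (K : Type*) [Field K] (n m : ℕ) :
    (subdisc K n m).IsSymmetric := by
  intro σ
  unfold subdisc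
  rw [map_sum]
  refine Finset.sum_nbij' (fun I => I.image σ) (fun I => I.image σ.symm) ?_ ?_ ?_ ?_ ?_
  · intro I hI
    rw [Finset.mem_powersetCard_univ] at hI ⊢
    rw [Finset.card_image_of_injective _ σ.injective, hI]
  · intro I hI
    rw [Finset.mem_powersetCard_univ] at hI ⊢
    rw [Finset.card_image_of_injective _ σ.symm.injective, hI]
  · intro I _
    rw [Finset.image_image]
    simp
  · intro I _
    rw [Finset.image_image]
    simp
  · intro I _
    rw [map_prod]
    simp only [map_pow, map_sub, rename_X]
    exact (prod_sq_pairs_image I (⇑σ) (σ.injective.injOn) (X : Fin n → MvPolynomial (Fin n) K)).symm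

private lemma aeval_subdisc {K : Type*} [Field K] (m μv n : ℕ)
    (asg : Fin n → Fin m)
    (hasg : ∀ j, (Finset.univ.filter (fun i => asg i = j)).card = μv) :
    MvPolynomial.aeval (R := K) (fun i => (X (asg i) : MvPolynomial (Fin m) K))
        (subdisc K n m)
      = (μv ^ m) •
        ∏ p ∈ (Finset.univ : Finset (Fin m × Fin m)).filter (fun p => p.1 < p.2),
          (X p.1 - X p.2) ^ 2 := by
  classical
  set D : MvPolynomial (Fin m) K :=
    ∏ p ∈ (Finset.univ : Finset (Fin m × Fin m)).filter (fun p => p.1 < p.2),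
      (X p.1 - X p.2) ^ 2 with hD
  unfold subdisc
  rw [map_sum]
  have hterm : ∀ I : Finset (Fin n),
      (MvPolynomial.aeval (R := K) (fun i => (X (asg i) : MvPolynomial (Fin m) K)))
        (∏ p ∈ I.offDiag.filter (fun p => p.1 < p.2), (X p.1 - X p.2) ^ 2)
      = ∏ p ∈ I.offDiag.filter (fun p => p.1 < p.2),
          ((X (asg p.1) : MvPolynomial (Fin m) K) - X (asg p.2)) ^ 2 := by
    intro I
    rw [map_prod]
    simp
  calc
    ∑ I ∈ Finset.powersetCard m (Finset.univ : Finset (Fin n)),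
        (MvPolynomial.aeval (R := K) (fun i => (X (asg i) : MvPolynomial (Fin m) K)))
          (∏ p ∈ I.offDiag.filter (fun p => p.1 < p.2), (X p.1 - X p.2) ^ 2)
      = ∑ I ∈ (Finset.powersetCard m (Finset.univ : Finset (Fin n))).filter
          (fun I : Finset (Fin n) => Set.InjOn asg (I : Set (Fin n))), D := by
        rw [Finset.sum_filter]
        refine Finset.sum_congr rfl ?_
        intro I hI
        rw [Finset.mem_powersetCard_univ] at hI
        rw [hterm I]
        by_cases hinj : Set.InjOn asg (I : Set (Fin n))
        · rw [if_pos hinj, hD]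
          have himg : I.image asg = Finset.univ := by
            apply Finset.eq_univ_of_card
            rw [Finset.card_image_of_injOn hinj, hI, Fintype.card_fin]
          refine (prod_sq_pairs_image I asg hinj (X : Fin m → MvPolynomial (Fin m) K)).symm.trans ?_
          rw [himg]
          congr 1
          ext p
          simp only [Finset.mem_filter, Finset.mem_offDiag, Finset.mem_univ, true_and,
            and_iff_right_iff_imp]
          exact fun h => h.ne
        · rw [if_neg hinj]
          simp only [Set.InjOn, not_forall] at hinj
          obtain ⟨a, ha, b, hb, hab, hne⟩ := hinj
          simp only [Finset.mem_coe] at ha hb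
          rcases Ne.lt_or_gt hne with hl | hl
          · refine Finset.prod_eq_zero (i := (a, b)) ?_ ?_
            · simp [Finset.mem_filter, Finset.mem_offDiag, ha, hb, hne, hl]
            · simp [hab]
          · refine Finset.prod_eq_zero (i := (b, a)) ?_ ?_
            · simp [Finset.mem_filter, Finset.mem_offDiag, ha, hb, Ne.symm hne, hl]
            · simp [hab]
    _ = (μv ^ m) • D := by
        rw [Finset.sum_const]
        congr 1
        have hcard : ((Finset.powersetCard m (Finset.univ : Finset (Fin n))).filter
            (fun I : Finset (Fin n) => Set.InjOn asg (I : Set (Fin n)))).card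
            = (Fintype.piFinset (fun j : Fin m =>
                Finset.univ.filter (fun i => asg i = j))).card := by
          symm
          refine Finset.card_bij (fun g _ => Finset.univ.image g) ?_ ?_ ?_
          · intro g hg'
            rw [Fintype.mem_piFinset] at hg'
            have hg : ∀ j, asg (g j) = j := by
              intro j
              have := hg' j
              simp only [Finset.mem_filter, Finset.mem_univ, true_and] at this
              exact this
            have hgi : Function.Injective g := by
              intro a b hab
              have : asg (g a) = asg (g b) := by rw [hab]
              rwa [hg a, hg b] at this
            rw [Finset.mem_filter, Finset.mem_powersetCard_univ]
            constructor
            · rw [Finset.card_image_of_injective _ hgi, Finset.card_univ, Fintype.card_fin]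
            · intro x hx y hy hxy
              simp only [Finset.coe_image, Set.mem_image] at hx hy
              obtain ⟨a, -, rfl⟩ := hx
              obtain ⟨b, -, rfl⟩ := hy
              rw [hg a, hg b] at hxy
              rw [hxy]
          · intro g hg' g'' hg'' heq
            rw [Fintype.mem_piFinset] at hg' hg''
            simp only [Finset.mem_filter, Finset.mem_univ, true_and] at hg' hg''
            funext j
            have hmem : g j ∈ Finset.univ.image g'' := by
              rw [← heq]; exact Finset.mem_image_of_mem g (Finset.mem_univ j)
            obtain ⟨j', -, hj'⟩ := Finset.mem_image.mp hmem
            have hjj : j' = j := by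
              have := hg'' j'
              rw [hj', hg' j] at this
              exact this.symm
            rw [← hj', hjj]
          · intro I hI
            rw [Finset.mem_filter, Finset.mem_powersetCard_univ] at hI
            obtain ⟨hIc, hinj⟩ := hI
            have himg : I.image asg = Finset.univ := by
              apply Finset.eq_univ_of_card
              rw [Finset.card_image_of_injOn hinj, hIc, Fintype.card_fin]
            have hex : ∀ j : Fin m, ∃ i ∈ I, asg i = j := by
              intro j
              have : j ∈ I.image asg := himg ▸ Finset.mem_univ j
              exact Finset.mem_image.mp this
            choose g hg1 hg2 using hex
            refine ⟨g, ?_, ?_⟩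
            · rw [Fintype.mem_piFinset]
              intro j
              simp [hg2 j]
            · apply Finset.eq_of_subset_of_card_le
              · intro x hx
                obtain ⟨j, -, rfl⟩ := Finset.mem_image.mp hx
                exact hg1 j
              · have hgi : Function.Injective g := by
                  intro a b hab
                  have := hg2 a
                  rw [hab, hg2 b] at this
                  exact this.symm
                rw [Finset.card_image_of_injective _ hgi, Finset.card_univ,
                  Fintype.card_fin, hIc]
        rw [hcard, Fintype.card_piFinset]
        simp only [hasg]
        rw [Finset.prod_const, Finset.card_univ, Fintype.card_fin]

theorem stmt13 {K : Type*} [Field K] [CharZero K] (m μv n : ℕ) (hμ : 1 ≤ μv)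
    (hn : n = m * μv)
    (asg : Fin n → Fin m) (hmono : Monotone asg)
    (hasg : ∀ j, (Finset.univ.filter (fun i => asg i = j)).card = μv) :
    ((((μv : K) ^ m)⁻¹ • subdisc K n m) ^ μv).IsSymmetric ∧
    MvPolynomial.aeval (R := K) (fun i => (X (asg i) : MvPolynomial (Fin m) K))
        ((((μv : K) ^ m)⁻¹ • subdisc K n m) ^ μv)
      = ∏ p ∈ (Finset.univ : Finset (Fin m × Fin m)).filter (fun p => p.1 < p.2),
          (X p.1 - X p.2) ^ (2 * μv) := by
  constructor
  · have hsym : ((((μv : K) ^ m)⁻¹ • subdisc K n m)).IsSymmetric :=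
      (subdisc_isSymmetric K n m).smul _
    intro e
    rw [map_pow, hsym e]
  · have hμ0 : ((μv : K) ^ m) ≠ 0 := by
      apply pow_ne_zero
      exact Nat.cast_ne_zero.mpr (by omega)
    rw [map_pow, map_smul, aeval_subdisc (K := K) m μv n asg hasg,
      ← Nat.cast_smul_eq_nsmul K, smul_smul]
    push_cast
    rw [inv_mul_cancel₀ hμ0, one_smul, ← Finset.prod_pow]
    refine Finset.prod_congr rfl ?_
    intro p _
    rw [← pow_mul, mul_comm]
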